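/- arXiv:1110.2554 — 2 statements merged into one kernel-verified Lean document; each statement's English description precedes it below -/
import Mathlib

section
/- Let k be a field and F = x_n·f_k(x₀,…,x_{n−1}) + f_{k+1}(x₀,…,x_{n−1}) with f_k, f_{k+1} homogeneous of degrees k and k+1 over k, f_k ≠ 0. Then the map (x₀:⋯:x_{n−1}) ↦ (x₀:⋯:x_{n−1}:−f_{k+1}/f_k) defines a bijection from the open set {f_k ≠ 0} ⊆ P^{n−1}(k) onto Z(F) ∖ Z(F, f_k) ⊆ P^n(k), with inverse given by forgetting the last coordinate. -/
open MvPolynomial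

private lemma eval_smul_homog {σ R : Type*} [CommRing R] {φ : MvPolynomial σ R} {m : ℕ}
    (hφ : φ.IsHomogeneous m) (c : R) (x : σ → R) :
    eval (c • x) φ = c ^ m * eval x φ := by
  rw [eval_eq, eval_eq, Finset.mul_sum]
  refine Finset.sum_congr rfl fun e he => ?_
  have hm : ∑ i ∈ e.support, e i = m := by
    have := hφ (mem_support_iff.mp he)
    simpa [Finsupp.weight_apply, Finsupp.sum] using this
  rw [← hm]
  simp only [Pi.smul_apply, smul_eq_mul, mul_pow]
  rw [Finset.prod_mul_distrib, Finset.prod_pow_eq_pow_sum]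
  ring

private lemma evalF {k : Type} [Field k] {n : ℕ} (fk fk1 : MvPolynomial (Fin n) k)
    (w : Fin (n + 1) → k) :
    eval w (X (Fin.last n) * rename Fin.castSucc fk + rename Fin.castSucc fk1) =
      w (Fin.last n) * eval (w ∘ Fin.castSucc) fk + eval (w ∘ Fin.castSucc) fk1 := by
  simp [eval_rename]

private lemma smul_comp_castSucc {k : Type} [Field k] {n : ℕ} (c : k) (w : Fin (n + 1) → k) :
    (c • w) ∘ Fin.castSucc = c • (w ∘ Fin.castSucc) := rfl

private lemma snoc_comp_castSucc' {k : Type} [Field k] {n : ℕ} (a : Fin n → k) (b : k) :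
    (Fin.snoc a b : Fin (n + 1) → k) ∘ Fin.castSucc = a := by
  funext i; simp [Fin.snoc_castSucc]

private lemma snoc_eta {k : Type} [Field k] {n : ℕ} (v : Fin (n + 1) → k) :
    (Fin.snoc (v ∘ Fin.castSucc) (v (Fin.last n)) : Fin (n + 1) → k) = v := by
  funext i
  refine Fin.lastCases ?_ ?_ i
  · simp
  · intro j; simp

private lemma smul_snoc {k : Type} [Field k] {n : ℕ} (c : k) (a : Fin n → k) (b : k) :
    c • (Fin.snoc a b : Fin (n + 1) → k) = Fin.snoc (c • a) (c * b) := by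
  funext i
  refine Fin.lastCases ?_ ?_ i
  · simp
  · intro j; simp

/-- For F = xₙ·f_k + f_{k+1}, the map (x₀:⋯:x_{n-1}) ↦ (x₀:⋯:x_{n-1}:-f_{k+1}/f_k)
is a bijection from {f_k ≠ 0} ⊆ ℙ^{n-1} onto Z(F) ∖ Z(F, f_k) ⊆ ℙ^n, with inverse
forgetting the last coordinate (equalities of points expressed via representatives
up to a nonzero scalar). -/
theorem graph_bijection {k : Type} [Field k] {n d : ℕ}
    (fk fk1 : MvPolynomial (Fin n) k)
    (hfk : fk.IsHomogeneous d) (hfk1 : fk1.IsHomogeneous (d + 1)) (h0 : fk ≠ 0) :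
    ∃ e : {x : Projectivization k (Fin n → k) // eval x.rep fk ≠ 0} ≃
          {y : Projectivization k (Fin (n + 1) → k) //
            eval y.rep (X (Fin.last n) * rename Fin.castSucc fk + rename Fin.castSucc fk1) = 0
            ∧ eval (y.rep ∘ Fin.castSucc) fk ≠ 0},
      (∀ x, ∃ c : k, c ≠ 0 ∧
        (e x).val.rep = c • (Fin.snoc x.val.rep (-(eval x.val.rep fk1) / eval x.val.rep fk) : Fin (n + 1) → k)) ∧
      (∀ y, ∃ c : k, c ≠ 0 ∧ (e.symm y).val.rep = c • (y.val.rep ∘ Fin.castSucc)) := by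
  classical
  set F : MvPolynomial (Fin (n + 1)) k :=
    X (Fin.last n) * rename Fin.castSucc fk + rename Fin.castSucc fk1 with hF
  -- the forward vector map
  have snocvec : ∀ x : {x : Projectivization k (Fin n → k) // eval x.rep fk ≠ 0},
      (Fin.snoc x.val.rep (-(eval x.val.rep fk1) / eval x.val.rep fk) : Fin (n + 1) → k) ≠ 0 := by
    intro x hx
    apply x.val.rep_nonzero
    funext i
    have := congrFun hx i.castSucc
    simpa [Fin.snoc_castSucc] using this
  -- forward function
  let f : {x : Projectivization k (Fin n → k) // eval x.rep fk ≠ 0} →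
      {y : Projectivization k (Fin (n + 1) → k) //
        eval y.rep F = 0 ∧ eval (y.rep ∘ Fin.castSucc) fk ≠ 0} := fun x => by
    refine ⟨Projectivization.mk k _ (snocvec x), ?_, ?_⟩
    · obtain ⟨c, hc⟩ := Projectivization.exists_smul_eq_mk_rep k _ (snocvec x)
      rw [← hc, hF, Units.smul_def, evalF, smul_comp_castSucc, snoc_comp_castSucc']
      rw [eval_smul_homog hfk, eval_smul_homog hfk1]
      simp only [Pi.smul_apply, smul_eq_mul, Fin.snoc_last]
      have hE := x.prop
      field_simp
      ring
    · obtain ⟨c, hc⟩ := Projectivization.exists_smul_eq_mk_rep k _ (snocvec x)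
      rw [← hc, Units.smul_def, smul_comp_castSucc, snoc_comp_castSucc', eval_smul_homog hfk]
      exact mul_ne_zero (pow_ne_zero _ c.ne_zero) x.prop
  have hfprop : ∀ x, ∃ c : k, c ≠ 0 ∧
      (f x).val.rep = c • (Fin.snoc x.val.rep (-(eval x.val.rep fk1) / eval x.val.rep fk) :
        Fin (n + 1) → k) := by
    intro x
    obtain ⟨c, hc⟩ := Projectivization.exists_smul_eq_mk_rep k _ (snocvec x)
    exact ⟨(c : k), c.ne_zero, hc.symm⟩
  -- injectivity
  have hinj : Function.Injective f := by
    intro x₁ x₂ h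
    obtain ⟨c₁, hc₁0, hc₁⟩ := hfprop x₁
    obtain ⟨c₂, hc₂0, hc₂⟩ := hfprop x₂
    have hrep : (f x₁).val.rep = (f x₂).val.rep := by rw [h]
    rw [hc₁, hc₂] at hrep
    have hcv : c₁ • x₁.val.rep = c₂ • x₂.val.rep := by
      funext i
      have := congrFun hrep i.castSucc
      simpa [Fin.snoc_castSucc] using this
    have h1 : x₁.val = x₂.val := by
      rw [← x₁.val.mk_rep, ← x₂.val.mk_rep]
      rw [Projectivization.mk_eq_mk_iff']
      refine ⟨c₁⁻¹ * c₂, ?_⟩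
      rw [mul_smul, ← hcv, ← mul_smul, inv_mul_cancel₀ hc₁0, one_smul]
    exact Subtype.ext h1
  -- surjectivity
  have hsurj : Function.Surjective f := by
    rintro ⟨y, hy1, hy2⟩
    set v : Fin (n + 1) → k := y.rep with hv
    have hvF : v (Fin.last n) * eval (v ∘ Fin.castSucc) fk + eval (v ∘ Fin.castSucc) fk1 = 0 := by
      rw [← evalF]; exact hy1
    set a : Fin n → k := v ∘ Fin.castSucc with ha
    have ha0 : a ≠ 0 := by
      intro h
      rw [h] at hy2
      have hfk10 : eval (0 : Fin n → k) fk1 = 0 := by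
        have := eval_smul_homog hfk1 (0 : k) (0 : Fin n → k)
        simpa using this
      rw [h, hfk10, add_zero] at hvF
      have hvl : v (Fin.last n) = 0 := by
        rcases mul_eq_zero.mp hvF with h' | h'
        · exact h'
        · exact absurd h' hy2
      apply y.rep_nonzero
      rw [← snoc_eta y.rep]
      show (Fin.snoc a (v (Fin.last n)) : Fin (n + 1) → k) = 0
      rw [h, hvl]
      funext i
      refine Fin.lastCases ?_ ?_ i <;> simp
    have hb : v (Fin.last n) = -(eval a fk1) / eval a fk := by
      rw [eq_div_iff hy2]
      linear_combination hvF
    -- the preimage point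
    have hx0 : eval (Projectivization.mk k a ha0).rep fk ≠ 0 := by
      obtain ⟨u, hu⟩ := Projectivization.exists_smul_eq_mk_rep k a ha0
      rw [← hu, Units.smul_def, eval_smul_homog hfk]
      exact mul_ne_zero (pow_ne_zero _ u.ne_zero) hy2
    refine ⟨⟨Projectivization.mk k a ha0, hx0⟩, ?_⟩
    apply Subtype.ext
    show Projectivization.mk k _ (snocvec _) = y
    obtain ⟨u, hu⟩ := Projectivization.exists_smul_eq_mk_rep k a ha0
    conv_rhs => rw [← y.mk_rep]
    rw [Projectivization.mk_eq_mk_iff']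
    refine ⟨(u : k), ?_⟩
    have hrep : (⟨Projectivization.mk k a ha0, hx0⟩ :
        {x : Projectivization k (Fin n → k) // eval x.rep fk ≠ 0}).val.rep = (u : k) • a := by
      rw [← hu]; rfl
    rw [hrep, eval_smul_homog hfk, eval_smul_homog hfk1]
    have : -((u : k) ^ (d + 1) * eval a fk1) / ((u : k) ^ d * eval a fk)
        = (u : k) * (-(eval a fk1) / eval a fk) := by
      field_simp
      ring
    rw [this, ← hb, ← smul_snoc]
    exact congrArg ((u:k) • ·) (snoc_eta v).symm
  -- assemble
  refine ⟨Equiv.ofBijective f ⟨hinj, hsurj⟩, ?_, ?_⟩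
  · intro x
    exact hfprop x
  · intro y
    set x := (Equiv.ofBijective f ⟨hinj, hsurj⟩).symm y with hx
    have hfx : f x = y := (Equiv.ofBijective f ⟨hinj, hsurj⟩).apply_symm_apply y
    obtain ⟨c, hc0, hc⟩ := hfprop x
    rw [hfx] at hc
    refine ⟨c⁻¹, inv_ne_zero hc0, ?_⟩
    rw [hc, smul_comp_castSucc, snoc_comp_castSucc', ← mul_smul, inv_mul_cancel₀ hc0, one_smul]
end

section
/- Let q be a prime power, n ≥ 3, and let F ∈ F_q[x₀,…,x_n] be a cubic form that is singular at the point (0:⋯:0:1), i.e., F = x_n·f₂(x₀,…,x_{n−1}) + f₃(x₀,…,x_{n−1}) with f₂, f₃ homogeneous of degrees 2 and 3 (possibly f₂ = 0). Then |Z(F)(F_q)| ≡ 1 (mod q). -/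
open MvPolynomial
open scoped Classical

set_option linter.unusedSectionVars false
set_option maxHeartbeats 1000000

section Aux


variable {K : Type} [Field K] [Fintype K]

private lemma deg_two_classify {m : ℕ} (d : Fin m →₀ ℕ) (hd : Finsupp.degree d = 2) :
    ∃ i j, d = Finsupp.single i 1 + Finsupp.single j 1 := by
  classical
  have h1 : Multiset.card d.toMultiset = 2 := by
    rw [Finsupp.card_toMultiset]
    simpa [Finsupp.sum, Finsupp.degree_apply] using hd
  obtain ⟨i, j, hij⟩ := Multiset.card_eq_two.mp h1
  refine ⟨i, j, ?_⟩
  have h2 := congrArg Multiset.toFinsupp hij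
  rwa [Finsupp.toMultiset_toFinsupp, show ({i, j} : Multiset (Fin m)) = {i} + {j} by
      rw [Multiset.singleton_add]; rfl,
    Multiset.toFinsupp_add, Multiset.toFinsupp_singleton, Multiset.toFinsupp_singleton] at h2

private lemma eval_monomial_two {m : ℕ} (i j : Fin m) (c : K) (y : Fin m → K) :
    eval y (monomial (Finsupp.single i 1 + Finsupp.single j 1) c) = c * (y i * y j) := by
  classical
  rw [eval_monomial, Finsupp.prod_add_index' (fun a => pow_zero (y a)) (fun a b₁ b₂ => pow_add _ _ _),
    Finsupp.prod_single_index (h := fun a b => y a ^ b) (pow_zero (y i)),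
    Finsupp.prod_single_index (h := fun a b => y a ^ b) (pow_zero (y j))]
  ring

private lemma exists_polar {m : ℕ} (f : MvPolynomial (Fin m) K) (hf : f.IsHomogeneous 2) :
    ∃ B : (Fin m → K) → (Fin m → K) → K,
      (∀ x v t, eval (x + t • v) f = eval x f + t * B v x + t ^ 2 * eval v f) ∧
      (∀ c v x, B (c • v) x = c * B v x) ∧
      (∀ v x w t, B v (x + t • w) = B v x + t * B v w) := by
  classical
  have key : ∀ s : Finset (Fin m →₀ ℕ),
      (∀ d ∈ s, ∃ i j, d = Finsupp.single i 1 + Finsupp.single j 1) →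
      ∀ g : (Fin m →₀ ℕ) → K, ∃ B : (Fin m → K) → (Fin m → K) → K,
      (∀ x v t, eval (x + t • v) (∑ d ∈ s, monomial d (g d)) =
          eval x (∑ d ∈ s, monomial d (g d)) + t * B v x
            + t ^ 2 * eval v (∑ d ∈ s, monomial d (g d))) ∧
      (∀ c v x, B (c • v) x = c * B v x) ∧
      (∀ v x w t, B v (x + t • w) = B v x + t * B v w) := by
    intro s
    induction s using Finset.induction_on with
    | empty => exact fun _ g => ⟨fun _ _ => 0, by simp, by simp, by simp⟩
    | @insert d s hds ih =>
      intro hs g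
      obtain ⟨B1, hB1, hB2, hB3⟩ := ih (fun e he => hs e (Finset.mem_insert_of_mem he)) g
      obtain ⟨i, j, hdij⟩ := hs d (Finset.mem_insert_self d s)
      refine ⟨fun v x => g d * (v i * x j + v j * x i) + B1 v x, ?_, ?_, ?_⟩
      · intro x v t
        rw [Finset.sum_insert hds]
        simp only [map_add]
        rw [hB1 x v t, hdij, eval_monomial_two, eval_monomial_two, eval_monomial_two]
        simp only [Pi.add_apply, Pi.smul_apply, smul_eq_mul]
        ring
      · intro c v x
        simp only []
        rw [hB2]
        simp only [Pi.smul_apply, smul_eq_mul]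
        ring
      · intro v x w t
        simp only []
        rw [hB3]
        simp only [Pi.add_apply, Pi.smul_apply, smul_eq_mul]
        ring
  obtain ⟨B, h1, h2, h3⟩ := key f.support
    (fun d hd => deg_two_classify d (by
      by_contra h
      exact mem_support_iff.mp hd (hf.coeff_eq_zero h))) (fun d => coeff d f)
  rw [support_sum_monomial_coeff f] at h1
  exact ⟨B, h1, h2, h3⟩

private lemma eval_smul_homog_s17 {m k : ℕ} (f : MvPolynomial (Fin m) K) (hf : f.IsHomogeneous k)
    (c : K) (x : Fin m → K) : eval (c • x) f = c ^ k * eval x f := by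
  classical
  conv_lhs => rw [← support_sum_monomial_coeff f]
  conv_rhs => rw [← support_sum_monomial_coeff f]
  rw [map_sum, map_sum, Finset.mul_sum]
  apply Finset.sum_congr rfl
  intro d hd
  have hdeg : Finsupp.degree d = k := by
    by_contra h
    exact mem_support_iff.mp hd (hf.coeff_eq_zero h)
  rw [eval_monomial, eval_monomial, Finsupp.prod, Finsupp.prod]
  simp only [Pi.smul_apply, smul_eq_mul, mul_pow]
  rw [Finset.prod_mul_distrib, Finset.prod_pow_eq_pow_sum]
  rw [show ∑ i ∈ d.support, d i = k from hdeg]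
  ring


private lemma shear {m : ℕ} (P : (Fin m → K) → Prop) (w : Fin m → K) (i : Fin m)
    (hw : w i = 1) (hP : ∀ (x : Fin m → K) (t : K), P x → P (x + t • w)) :
    Fintype.card K ∣ Nat.card {x : Fin m → K // P x} := by
  classical
  have e : {x : Fin m → K // P x} ≃ {x : Fin m → K // P x ∧ x i = 0} × K :=
    { toFun := fun x => (⟨x.1 + (-(x.1 i)) • w,
        ⟨hP _ _ x.2, by simp [hw]⟩⟩, x.1 i)
      invFun := fun p => ⟨p.1.1 + p.2 • w, hP _ _ p.1.2.1⟩
      left_inv := fun x => by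
        apply Subtype.ext
        simp [add_assoc, ← add_smul]
      right_inv := fun p => by
        have hcoord : (p.1.1 + p.2 • w) i = p.2 := by
          simp [hw, p.1.2.2]
        refine Prod.ext (Subtype.ext ?_) hcoord
        simp only [hcoord]
        simp [add_assoc, ← add_smul] }
  rw [Nat.card_congr e, Nat.card_prod, Nat.card_eq_fintype_card (α := K)]
  exact Dvd.intro _ (mul_comm _ _)

private lemma card_partition {α : Type} [Finite α] (P R : α → Prop) :
    Nat.card {x : α // P x} =
      Nat.card {x : α // P x ∧ R x} + Nat.card {x : α // P x ∧ ¬ R x} := by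
  classical
  rw [← Nat.card_sum]
  apply Nat.card_congr
  refine ⟨fun x => if h : R x.1 then Sum.inl ⟨x.1, x.2, h⟩ else Sum.inr ⟨x.1, x.2, h⟩,
    Sum.elim (fun x => ⟨x.1, x.2.1⟩) (fun x => ⟨x.1, x.2.1⟩), fun x => ?_, fun x => ?_⟩
  · by_cases h : R x.1 <;> simp [h]
  · rcases x with x | x
    · simp [x.2.2]
    · simp [x.2.2]


private lemma quadric_card_dvd {m : ℕ} (hm : 3 ≤ m) (f : MvPolynomial (Fin m) K)
    (hf : f.IsHomogeneous 2) :
    Fintype.card K ∣ Nat.card {x : Fin m → K // eval x f = 0} := by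
  classical
  obtain ⟨B, hB1, hB2, hB3⟩ := exists_polar f hf
  have hBv0 : ∀ v, B v 0 = 0 := by
    intro v
    have h : B v 0 = B v 0 + B v 0 := by simpa using hB3 v 0 0 1
    exact (left_eq_add.mp h)
  have hc0 : constantCoeff f = 0 := hf.coeff_eq_zero (by simp [map_zero])
  have heval0 : eval (0 : Fin m → K) f = 0 := by
    simp [hc0]
  have hscale : ∀ (c : K) (v : Fin m → K), eval (c • v) f = c ^ 2 * eval v f := by
    intro c v
    have h := hB1 0 v c
    simpa [hc0, hBv0] using h
  by_cases hf0 : f = 0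
  · subst hf0
    have i0 : Fin m := ⟨0, by omega⟩
    exact shear (fun x => eval x (0 : MvPolynomial (Fin m) K) = 0) (Pi.single i0 1) i0
      (by simp) (fun x t _ => by simp)
  · set p := ringChar K with hp
    have hpf : Fact p.Prime := ⟨CharP.char_is_prime K p⟩
    have hdeg : f.totalDegree < Fintype.card (Fin m) := by
      rw [Fintype.card_fin]
      have := hf.totalDegree_le
      omega
    have hdvd := char_dvd_card_solutions p hdeg
    have hpos : 0 < Fintype.card {x : Fin m → K // eval x f = 0} :=
      Fintype.card_pos_iff.mpr ⟨⟨0, heval0⟩⟩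
    have hcard2 : 1 < Fintype.card {x : Fin m → K // eval x f = 0} := by
      have h1 := Nat.le_of_dvd hpos hdvd
      have h2 := hpf.out.two_le
      omega
    obtain ⟨v', hv'⟩ := Fintype.exists_ne_of_one_lt_card hcard2 ⟨0, heval0⟩
    have hv0 : v'.1 ≠ 0 := fun h => hv' (Subtype.ext h)
    set v := v'.1 with hvdef
    have hQv : eval v f = 0 := v'.2
    obtain ⟨i, hvi⟩ : ∃ i, v i ≠ 0 := by
      by_contra h
      push_neg at h
      exact hv0 (funext h)
    set w : Fin m → K := (v i)⁻¹ • v with hwdef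
    have hwi : w i = 1 := by
      simp [hwdef, inv_mul_cancel₀ hvi]
    have hQw : eval w f = 0 := by rw [hwdef, hscale, hQv]; ring
    have hBw : ∀ x, B w x = (v i)⁻¹ * B v x := fun x => hB2 _ _ _
    have key : ∀ (x : Fin m → K) (t : K),
        eval (x + t • w) f = eval x f + t * ((v i)⁻¹ * B v x) := by
      intro x t
      rw [hB1, hQw, hBw]
      ring
    have hφv : B v v = 0 := by
      have e1 := hB1 v v 1
      have e2 : v + (1 : K) • v = (2 : K) • v := by
        rw [one_smul, two_smul]
      rw [e2, hscale] at e1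
      simpa [hQv] using e1.symm
    have hφw : B v w = 0 := by
      have hw0 : w = 0 + (v i)⁻¹ • v := by simp [hwdef]
      rw [hw0, hB3, hBv0, hφv]
      ring
    have hBline : ∀ (y : Fin m → K) (t : K), B v (y + t • w) = B v y := by
      intro y t
      rw [hB3, hφw]; ring
    by_cases hφ : ∀ x, B v x = 0
    · apply shear (fun x => eval x f = 0) w i hwi
      intro x t hx
      show eval (x + t • w) f = 0
      have hx' : eval x f = 0 := hx
      rw [key, hφ, hx']; ring
    · push_neg at hφ
      rw [card_partition (fun x => eval x f = 0) (fun x => B v x = 0)]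
      have part1 : Fintype.card K ∣
          Nat.card {x : Fin m → K // eval x f = 0 ∧ B v x = 0} := by
        apply shear _ w i hwi
        intro x t hx
        have hx' : eval x f = 0 ∧ B v x = 0 := hx
        refine ⟨?_, ?_⟩
        · show eval (x + t • w) f = 0
          rw [key, hx'.1, hx'.2]; ring
        · show B v (x + t • w) = 0
          rw [hBline]; exact hx'.2
      have heq2 : {x : Fin m → K // eval x f = 0 ∧ ¬ B v x = 0} ≃
          {y : Fin m → K // y i = 0 ∧ ¬ B v y = 0} := by
        refine ⟨fun x => ⟨x.1 + (-(x.1 i)) • w, ?_, ?_⟩,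
          fun y => ⟨y.1 + (-(eval y.1 f) * ((v i)⁻¹ * B v y.1)⁻¹) • w, ?_, ?_⟩, ?_, ?_⟩
        · simp [hwi]
        · rw [hBline]; exact x.2.2
        · have hc : (v i)⁻¹ * B v y.1 ≠ 0 :=
            mul_ne_zero (inv_ne_zero hvi) y.2.2
          rw [key, mul_assoc, inv_mul_cancel₀ hc]
          ring
        · rw [hBline]; exact y.2.2
        · intro x
          apply Subtype.ext
          show (x.1 + (-(x.1 i)) • w) +
            (-(eval (x.1 + (-(x.1 i)) • w) f) *
              ((v i)⁻¹ * B v (x.1 + (-(x.1 i)) • w))⁻¹) • w = x.1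
          have hBy : B v (x.1 + (-(x.1 i)) • w) = B v x.1 := hBline _ _
          have hc : (v i)⁻¹ * B v x.1 ≠ 0 :=
            mul_ne_zero (inv_ne_zero hvi) x.2.2
          have hev : eval x.1 f
              = eval (x.1 + (-(x.1 i)) • w) f + (x.1 i) * ((v i)⁻¹ * B v x.1) := by
            have h := key (x.1 + (-(x.1 i)) • w) (x.1 i)
            rw [show (x.1 + (-(x.1 i)) • w) + (x.1 i) • w = x.1 by
              simp [add_assoc, ← add_smul], hBy] at h
            exact h
          have h0 : eval (x.1 + (-(x.1 i)) • w) f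
              = -(x.1 i) * ((v i)⁻¹ * B v x.1) := by
            have hx0 : eval x.1 f = 0 := x.2.1
            rw [hx0] at hev
            linear_combination -hev
          rw [hBy, h0]
          rw [show -(-(x.1 i) * ((v i)⁻¹ * B v x.1)) * ((v i)⁻¹ * B v x.1)⁻¹
              = x.1 i by field_simp [x.2.2]]
          simp [add_assoc, ← add_smul]
        · intro y
          apply Subtype.ext
          show (y.1 + (-(eval y.1 f) * ((v i)⁻¹ * B v y.1)⁻¹) • w) +
            (-((y.1 + (-(eval y.1 f) * ((v i)⁻¹ * B v y.1)⁻¹) • w) i)) • w = y.1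
          have hcoord : (y.1 + (-(eval y.1 f) * ((v i)⁻¹ * B v y.1)⁻¹) • w) i
              = -(eval y.1 f) * ((v i)⁻¹ * B v y.1)⁻¹ := by
            simp [hwi, y.2.1]
          rw [hcoord]
          simp [add_assoc, ← add_smul]
      rw [Nat.card_congr heq2]
      -- divisibility for the slice {y // y i = 0 ∧ B v y ≠ 0}
      have hsum := card_partition (α := Fin m → K) (fun y => y i = 0) (fun y => B v y = 0)
      have hq2 : 1 < Fintype.card K := Fintype.one_lt_card
      -- q ∣ card {y // y i = 0}
      have hnt : Nontrivial (Fin m) := by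
        have h2 : 2 ≤ m := le_trans (by norm_num) hm
        exact Fin.nontrivial_iff_two_le.mpr h2
      obtain ⟨j, hji⟩ := exists_ne i
      have htot : Fintype.card K ∣ Nat.card {y : Fin m → K // y i = 0} := by
        apply shear (fun y => y i = 0) (Pi.single j 1 : Fin m → K) j (by simp)
        intro y t hy
        show (y + t • (Pi.single j 1 : Fin m → K)) i = 0
        have hy' : y i = 0 := hy
        simp [hy', Pi.single_eq_of_ne (Ne.symm hji)]
      -- q ∣ card {y // y i = 0 ∧ B v y = 0}
      have hBsub : ∀ a b : Fin m → K, B v (a - b) = B v a - B v b := by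
        intro a b
        have h := hB3 v a b (-1)
        rw [show a + (-1 : K) • b = a - b by
          rw [neg_one_smul, ← sub_eq_add_neg]] at h
        linear_combination h
      have hker : ∃ u : Fin m → K, u ≠ 0 ∧ u i = 0 ∧ B v u = 0 := by
        by_contra hno
        push_neg at hno
        have hinj : Function.Injective (fun y : Fin m → K => (y i, B v y)) := by
          intro a b hab
          have h1 : a i = b i := congrArg Prod.fst hab
          have h2 : B v a = B v b := congrArg Prod.snd hab
          by_contra hne
          exact hno (a - b) (sub_ne_zero.mpr hne)
            (by simp [h1]) (by rw [hBsub, h2, sub_self])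
        have hcard := Fintype.card_le_of_injective _ hinj
        rw [Fintype.card_prod] at hcard
        have hfun : Fintype.card (Fin m → K) = Fintype.card K ^ m := by
          rw [Fintype.card_fun, Fintype.card_fin]
        rw [hfun] at hcard
        have h3 : Fintype.card K ^ 3 ≤ Fintype.card K ^ m :=
          Nat.pow_le_pow_right (Nat.zero_lt_one.trans hq2) hm
        have h4 : Fintype.card K * Fintype.card K < Fintype.card K ^ 3 := by
          have h5 : Fintype.card K ^ 2 < Fintype.card K ^ 3 :=
            Nat.pow_lt_pow_right hq2 (by norm_num)
          calc Fintype.card K * Fintype.card K = Fintype.card K ^ 2 := by ring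
          _ < Fintype.card K ^ 3 := h5
        exact absurd hcard (not_le.mpr (lt_of_lt_of_le h4 h3))
      obtain ⟨u, hu0, hui, hBu⟩ := hker
      obtain ⟨j2, huj⟩ : ∃ j2, u j2 ≠ 0 := by
        by_contra h
        push_neg at h
        exact hu0 (funext h)
      have hBw2 : B v ((u j2)⁻¹ • u) = 0 := by
        rw [show ((u j2)⁻¹ • u : Fin m → K) = 0 + (u j2)⁻¹ • u by simp,
          hB3, hBv0, hBu]
        ring
      have hzer : Fintype.card K ∣
          Nat.card {y : Fin m → K // y i = 0 ∧ B v y = 0} := by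
        apply shear (fun y => y i = 0 ∧ B v y = 0) ((u j2)⁻¹ • u) j2
          (by simp [inv_mul_cancel₀ huj])
        intro y t hy
        have hy' : y i = 0 ∧ B v y = 0 := hy
        refine ⟨?_, ?_⟩
        · show (y + t • (u j2)⁻¹ • u) i = 0
          simp [hy'.1, hui]
        · show B v (y + t • (u j2)⁻¹ • u) = 0
          rw [hB3, hy'.2, hBw2]; ring
      rw [hsum] at htot
      exact dvd_add part1 ((Nat.dvd_add_right hzer).mp htot)

private lemma proj_affine_card {N : ℕ} [Nontrivial (Fin N → K)] {k : ℕ}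
    (F : MvPolynomial (Fin N) K) (hF : F.IsHomogeneous k) :
    Nat.card {y : Fin N → K // eval y F = 0 ∧ y ≠ 0} =
      Nat.card ({x : Projectivization K (Fin N → K) // eval x.rep F = 0} × Kˣ) := by
  classical
  have hs : ∀ (c : K) (y : Fin N → K), eval (c • y) F = c ^ k * eval y F :=
    fun c y => eval_smul_homog_s17 F hF c y
  refine (Nat.card_eq_of_bijective
    (fun p : {x : Projectivization K (Fin N → K) // eval x.rep F = 0} × Kˣ =>
      (⟨(p.2 : K) • p.1.1.rep,
        by rw [hs, p.1.2]; ring,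
        smul_ne_zero (Units.ne_zero p.2) (Projectivization.rep_nonzero _)⟩ :
        {y : Fin N → K // eval y F = 0 ∧ y ≠ 0}))
    ⟨?_, ?_⟩).symm
  · rintro ⟨⟨x, hx⟩, c⟩ ⟨⟨x', hx'⟩, c'⟩ h
    have hval : (c : K) • x.rep = (c' : K) • x'.rep := congrArg Subtype.val h
    have hxx : x = x' := by
      have hmk : Projectivization.mk K x.rep (Projectivization.rep_nonzero x)
          = Projectivization.mk K x'.rep (Projectivization.rep_nonzero x') := by
        rw [Projectivization.mk_eq_mk_iff]
        refine ⟨c⁻¹ * c', ?_⟩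
        rw [Units.smul_def, Units.val_mul, mul_smul, ← hval, smul_smul]
        norm_num
      rwa [Projectivization.mk_rep, Projectivization.mk_rep] at hmk
    subst hxx
    have hcc : (c : K) = (c' : K) :=
      smul_left_injective K (Projectivization.rep_nonzero x) hval
    have : c = c' := Units.ext hcc
    subst this
    rfl
  · rintro ⟨y, hy0, hyne⟩
    have hmkrep : ∃ a : Kˣ, a • (Projectivization.mk K y hyne).rep = y :=
      (Projectivization.mk_eq_mk_iff K y _ hyne (Projectivization.rep_nonzero _)).mp
        (Projectivization.mk_rep _).symm
    obtain ⟨a, ha⟩ := hmkrep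
    rw [Units.smul_def] at ha
    have hrep0 : eval (Projectivization.mk K y hyne).rep F = 0 := by
      have h0 : eval ((a : K) • (Projectivization.mk K y hyne).rep) F = 0 := by
        rw [ha]; exact hy0
      rw [hs] at h0
      exact (mul_eq_zero.mp h0).resolve_left (pow_ne_zero _ a.ne_zero)
    exact ⟨(⟨Projectivization.mk K y hyne, hrep0⟩, a), Subtype.ext ha⟩

private lemma card_linear_cast (q : ℕ) (hq : Fintype.card K = q) (A b : K) :
    ((Nat.card {t : K // t * A + b = 0} : ℕ) : ZMod q)
      = if A = 0 then 0 else 1 := by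
  classical
  rw [Nat.card_eq_fintype_card]
  by_cases hA : A = 0
  · subst hA
    by_cases hb : b = 0
    · subst hb
      rw [if_pos rfl]
      have he : ∀ t : K, t * 0 + 0 = 0 := by intro t; ring
      rw [Fintype.card_congr (Equiv.subtypeUnivEquiv he), hq]
      exact ZMod.natCast_self q
    · rw [if_pos rfl]
      have hz : Fintype.card {t : K // t * 0 + b = 0} = 0 :=
        Fintype.card_eq_zero_iff.mpr ⟨fun t => hb (by simpa using t.2)⟩
      rw [hz]
      simp
  · rw [if_neg hA]
    have he : ∀ t : K, t * A + b = 0 ↔ t = -b / A := by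
      intro t
      rw [eq_div_iff hA]
      constructor
      · intro h; linear_combination h
      · intro h; linear_combination h
    rw [Fintype.card_congr (Equiv.subtypeEquivRight he), Fintype.card_subtype_eq]
    simp

end Aux

/-- A cubic hypersurface in ℙ^n (n ≥ 3) over F_q singular at (0:⋯:0:1), i.e. with
equation F = xₙ·f₂(x₀,…,x_{n-1}) + f₃(x₀,…,x_{n-1}), has ≡ 1 mod q points. -/
theorem singular_cubic_count {K : Type} [Field K] [Fintype K] {q n : ℕ}
    (hq : Fintype.card K = q) (hn : 3 ≤ n)
    (f₂ f₃ : MvPolynomial (Fin n) K)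
    (h₂ : f₂.IsHomogeneous 2) (h₃ : f₃.IsHomogeneous 3) :
    Nat.card {x : Projectivization K (Fin (n + 1) → K) //
      eval x.rep (X (Fin.last n) * rename Fin.castSucc f₂ + rename Fin.castSucc f₃) = 0}
      ≡ 1 [MOD q] := by
  classical
  subst hq
  haveI : Nontrivial (Fin (n + 1) → K) := by
    refine ⟨⟨(fun _ => 0), (fun _ => 1), fun h => ?_⟩⟩
    have h0 := congrFun h 0
    simp at h0
  set F : MvPolynomial (Fin (n + 1)) K :=
    X (Fin.last n) * rename Fin.castSucc f₂ + rename Fin.castSucc f₃ with hFdef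
  have hFhom : F.IsHomogeneous 3 := by
    refine MvPolynomial.IsHomogeneous.add ?_ (h₃.rename_isHomogeneous (f := Fin.castSucc))
    have h12 := (isHomogeneous_X K (Fin.last n)).mul
      (h₂.rename_isHomogeneous (f := Fin.castSucc))
    simpa using h12
  set Np := Nat.card {x : Projectivization K (Fin (n + 1) → K) // eval x.rep F = 0} with hNp
  have heval0 : eval (0 : Fin (n + 1) → K) F = 0 := by
    have hc : constantCoeff F = 0 := hFhom.coeff_eq_zero (by simp [map_zero])
    simp [hc]
  have hone : Nat.card {y : Fin (n + 1) → K // eval y F = 0 ∧ y = 0} = 1 := by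
    rw [Nat.card_eq_one_iff_unique]
    exact ⟨⟨fun a b => Subtype.ext (a.2.2.trans b.2.2.symm)⟩, ⟨⟨0, heval0, rfl⟩⟩⟩
  have haff : Nat.card {y : Fin (n + 1) → K // eval y F = 0}
      = 1 + Np * (Fintype.card K - 1) := by
    rw [card_partition (fun y => eval y F = 0) (fun y => y = 0), hone]
    congr 1
    have hcongr : Nat.card {y : Fin (n + 1) → K // eval y F = 0 ∧ ¬ y = 0}
        = Nat.card {y : Fin (n + 1) → K // eval y F = 0 ∧ y ≠ 0} := rfl
    rw [hcongr, proj_affine_card F hFhom, Nat.card_prod,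
      Nat.card_eq_fintype_card (α := Kˣ), Fintype.card_units, hNp]
  have hEval : ∀ y : Fin (n + 1) → K,
      eval y F = y (Fin.last n) * eval (y ∘ Fin.castSucc) f₂
        + eval (y ∘ Fin.castSucc) f₃ := by
    intro y
    rw [hFdef]
    simp [eval_rename]
  have hsig : Nat.card {y : Fin (n + 1) → K // eval y F = 0}
      = ∑ z : Fin n → K, Nat.card {t : K // t * eval z f₂ + eval z f₃ = 0} := by
    have hsnocc : ∀ (z : Fin n → K) (t : K) (i : Fin n),
        (Fin.snoc z t : Fin (n + 1) → K) (Fin.castSucc i) = z i :=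
      fun z t i => Fin.snoc_castSucc _ _ _
    have e1 : {y : Fin (n + 1) → K // eval y F = 0} ≃
        {p : (Fin n → K) × K // p.2 * eval p.1 f₂ + eval p.1 f₃ = 0} :=
      { toFun := fun y => ⟨(y.1 ∘ Fin.castSucc, y.1 (Fin.last n)), by
          show y.1 (Fin.last n) * eval (y.1 ∘ Fin.castSucc) f₂
            + eval (y.1 ∘ Fin.castSucc) f₃ = 0
          rw [← hEval y.1]; exact y.2⟩
        invFun := fun p => ⟨Fin.snoc p.1.1 p.1.2, by
          rw [hEval]
          have hc : (Fin.snoc p.1.1 p.1.2 : Fin (n + 1) → K) ∘ Fin.castSucc = p.1.1 :=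
            funext fun i => hsnocc _ _ i
          rw [hc, Fin.snoc_last]
          exact p.2⟩
        left_inv := fun y => Subtype.ext (Fin.snoc_init_self y.1)
        right_inv := fun p => Subtype.ext (by
          apply Prod.ext
          · show (Fin.snoc p.1.1 p.1.2 : Fin (n + 1) → K) ∘ Fin.castSucc = p.1.1
            exact funext fun i => hsnocc _ _ i
          · show (Fin.snoc p.1.1 p.1.2 : Fin (n + 1) → K) (Fin.last n) = p.1.2
            exact Fin.snoc_last _ _) }
    rw [Nat.card_congr (e1.trans (Equiv.subtypeProdEquivSigmaSubtype
      (fun (z : Fin n → K) (t : K) => t * eval z f₂ + eval z f₃ = 0)))]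
    rw [Nat.card_eq_fintype_card, Fintype.card_sigma]
    exact Finset.sum_congr rfl (fun z _ => (Nat.card_eq_fintype_card).symm)
  have hcast : ((Nat.card {y : Fin (n + 1) → K // eval y F = 0} : ℕ)
      : ZMod (Fintype.card K)) = 0 := by
    rw [hsig, Nat.cast_sum]
    rw [Finset.sum_congr rfl (fun z _ => card_linear_cast (Fintype.card K) rfl
      (eval z f₂) (eval z f₃))]
    have hsplit : ∀ z : Fin n → K,
        (if eval z f₂ = 0 then (0 : ZMod (Fintype.card K)) else 1)
          = 1 - (if eval z f₂ = 0 then 1 else 0) := by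
      intro z; by_cases h : eval z f₂ = 0 <;> simp [h]
    rw [Finset.sum_congr rfl (fun z _ => hsplit z), Finset.sum_sub_distrib]
    have h1 : (∑ _z : Fin n → K, (1 : ZMod (Fintype.card K))) = 0 := by
      rw [Finset.sum_const, Finset.card_univ]
      have hcf : Fintype.card (Fin n → K) = Fintype.card K ^ n := by
        rw [Fintype.card_fun, Fintype.card_fin]
      rw [hcf, nsmul_eq_mul, mul_one, Nat.cast_pow, ZMod.natCast_self,
        zero_pow (by omega)]
    have h2 : (∑ z : Fin n → K,
        (if eval z f₂ = 0 then (1 : ZMod (Fintype.card K)) else 0)) = 0 := by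
      rw [Finset.sum_boole]
      rw [show ((Finset.univ.filter (fun z : Fin n → K => eval z f₂ = 0)).card : ZMod (Fintype.card K))
          = ((Fintype.card {z : Fin n → K // eval z f₂ = 0} : ℕ) : ZMod (Fintype.card K)) by
        rw [Fintype.card_subtype]]
      rw [ZMod.natCast_eq_zero_iff]
      have hdq := quadric_card_dvd (K := K) hn f₂ h₂
      rwa [Nat.card_eq_fintype_card] at hdq
    rw [h1, h2]
    ring
  rw [haff] at hcast
  have hq1 : 1 ≤ Fintype.card K := Fintype.card_pos
  have hfin : ((Np : ℕ) : ZMod (Fintype.card K)) = ((1 : ℕ) : ZMod (Fintype.card K)) := by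
    push_cast [Nat.cast_sub hq1] at hcast
    rw [ZMod.natCast_self] at hcast
    push_cast
    linear_combination -hcast
  exact (ZMod.natCast_eq_natCast_iff _ _ _).mp hfin
end
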